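/- Let \(A = \{a_0, \dots, a_{k-1}\}\) and \(B = \{b_0, \dots, b_{k-1}\}\) be disjoint \(k\)-element sets and let \(\mathcal{H}(A,B)\) consist of all triples \(\{a_i, a_j, b_{i+j}\}\) and \(\{a_i, a_j, b_{i+j+1}\}\) (indices mod \(k\), \(i \ne j\)). If \(X \subseteq A \cup B\) satisfies \(A \cap X \neq \emptyset\), \(A \setminus X \neq \emptyset\), and \(B \cap X = \emptyset\), then the graph \(G_{\mathcal{H}(A,B)}(X)\) is connected. -/

import Mathlib

/-- The graph `G_E(X)`: edges are pairs `{y, z}` such that `{x, y, z} ∈ E` for some `x ∈ X`. -/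
def blockGraphS {α : Type*} [DecidableEq α] (E : Set (Finset α)) (X : Set α) :
    SimpleGraph α where
  Adj y z := y ≠ z ∧ ∃ x ∈ X, ({x, y, z} : Finset α) ∈ E
  symm := by
    constructor
    rintro y z ⟨hyz, x, hx, he⟩
    refine ⟨hyz.symm, x, hx, ?_⟩
    have : ({x, z, y} : Finset α) = {x, y, z} := by ext t; simp; tauto
    rwa [this]
  loopless := ⟨fun y h => h.1 rfl⟩

/-- The hypergraph `H(A,B)`: all triples `{a_i, a_j, b_{i+j}}` and `{a_i, a_j, b_{i+j+1}}`
with indices taken modulo `k` and `i ≠ j`. -/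
def HAB {α : Type*} [DecidableEq α] (k : ℕ) (a b : ZMod k → α) : Set (Finset α) :=
  { e | ∃ i j : ZMod k, i ≠ j ∧
      (e = ({a i, a j, b (i + j)} : Finset α) ∨
       e = ({a i, a j, b (i + j + 1)} : Finset α)) }

lemma zmod_core {k : ℕ} [NeZero k] (S : Set (ZMod k)) {i₀ j₀ : ZMod k}
    (hi₀ : i₀ ∈ S) (hj₀ : j₀ ∉ S)
    (R : ZMod k → ZMod k → Prop)
    (hrefl : ∀ m, R m m)
    (hsymm : ∀ m m', R m m' → R m' m)
    (htrans : ∀ m₁ m₂ m₃, R m₁ m₂ → R m₂ m₃ → R m₁ m₃)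
    (hstep : ∀ i i' j, i ∈ S → i' ∈ S → j ∉ S →
      R (i + j) (i' + j) ∧ R (i + j) (i' + j + 1)) :
    ∀ m m', R m m' := by
  classical
  have hk : 0 < k := Nat.pos_of_ne_zero (NeZero.ne k)
  set P : ℕ → Prop := fun n => ∀ x : ZMod k, x ∈ S ↔ x + (n : ZMod k) ∈ S with hPdef
  have hPk : P k := by intro x; simp [hPdef, ZMod.natCast_self]
  have hex : ∃ n, 0 < n ∧ P n := ⟨k, hk, hPk⟩
  set d := Nat.find hex with hd
  obtain ⟨hdpos, hPd⟩ := Nat.find_spec hex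
  haveI : NeZero d := ⟨hdpos.ne'⟩
  have hdvd : ∀ n, P n → d ∣ n := by
    intro n
    induction n using Nat.strong_induction_on with
    | _ n ih =>
      intro hPn
      rcases Nat.eq_zero_or_pos n with h0 | hpos
      · simp [h0]
      rcases lt_or_ge n d with hlt | hle
      · exact absurd ⟨hpos, hPn⟩ (Nat.find_min hex hlt)
      · have hcast : ((n - d : ℕ) : ZMod k) + (d : ZMod k) = (n : ZMod k) := by
          rw [← Nat.cast_add]; congr 1; omega
        have hPnd : P (n - d) := by
          intro x
          have h1 := hPd (x + ((n - d : ℕ) : ZMod k))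
          have h2 := hPn x
          rw [add_assoc, hcast] at h1
          tauto
        have hdnd := ih (n - d) (by omega) hPnd
        have : n = (n - d) + d := by omega
        rw [this]
        exact Nat.dvd_add hdnd dvd_rfl
  have hkd : d ∣ k := hdvd k hPk
  set φ : ZMod k →+* ZMod d := ZMod.castHom hkd (ZMod d) with hφdef
  have hphi0 : ∀ z : ZMod k, φ z = 0 ↔ d ∣ z.val := by
    intro z
    have h1 : φ z = ((z.val : ℕ) : ZMod d) := by
      conv_lhs => rw [← ZMod.natCast_zmod_val z]
      exact map_natCast φ z.val
    rw [h1, ZMod.natCast_eq_zero_iff]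
  -- periodicity by multiples of d
  have hper : ∀ (c : ℕ) (i : ZMod k), i ∈ S → i + ((c * d : ℕ) : ZMod k) ∈ S := by
    intro c
    induction c with
    | zero => intro i hi; simpa using hi
    | succ c ih =>
      intro i hi
      have h1 := (hPd (i + ((c * d : ℕ) : ZMod k))).1 (ih i hi)
      have : i + (((c + 1) * d : ℕ) : ZMod k)
          = i + ((c * d : ℕ) : ZMod k) + ((d : ℕ) : ZMod k) := by
        push_cast; ring
      rw [this]
      exact h1
  have hperS : ∀ z : ZMod k, φ z = 0 → ∀ i ∈ S, i + z ∈ S := by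
    intro z hz i hi
    obtain ⟨c, hc⟩ := (hphi0 z).1 hz
    have : z = ((c * d : ℕ) : ZMod k) := by
      rw [← ZMod.natCast_zmod_val z, hc]; push_cast; ring
    rw [this]
    exact hper c i hi
  set Bad : ZMod k → Prop := fun m => ∀ i ∈ S, m - i ∈ S with hBaddef
  have hbad2 : ∀ v x, Bad v → Bad x → φ (x - v) = 0 := by
    intro v x hv hx
    have hP' : P (x - v).val := by
      intro y
      constructor
      · intro hy
        have h1 := hx _ (hv y hy)
        have : x - (v - y) = y + (((x - v).val : ℕ) : ZMod k) := by
          rw [ZMod.natCast_zmod_val]; ring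
        rwa [this] at h1
      · intro hy
        have h1 := hx _ hy
        have : x - (y + (((x - v).val : ℕ) : ZMod k)) = v - y := by
          rw [ZMod.natCast_zmod_val]; ring
        rw [this] at h1
        have h2 := hv _ h1
        simpa using h2
    have := hdvd _ hP'
    rw [hphi0]; exact this
  have hlink : ∀ m, ¬ Bad m → R m (m + 1) := by
    intro m hm
    have hm' : ∃ i ∈ S, m - i ∉ S := by
      by_contra h
      push_neg at h
      exact hm h
    obtain ⟨i, hi, hni⟩ := hm'
    have h := (hstep i i (m - i) hi hi hni).2
    have h1 : i + (m - i) = m := by ring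
    have h2 : i + (m - i) + 1 = m + 1 := by ring
    rwa [h1] at h
  have hwalk : ∀ (m : ZMod k) (t : ℕ), (∀ s < t, ¬ Bad (m + (s : ZMod k))) →
      R m (m + (t : ZMod k)) := by
    intro m t
    induction t with
    | zero => intro _; simpa using hrefl m
    | succ t ih =>
      intro h
      have h1 := ih (fun s hs => h s (by omega))
      have h2 := hlink (m + (t : ZMod k)) (h t (by omega))
      have : m + ((t + 1 : ℕ) : ZMod k) = m + (t : ZMod k) + 1 := by push_cast; ring
      rw [this]
      exact htrans _ _ _ h1 h2
  set u : ZMod k := i₀ + j₀ with hudef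
  have hspec : ∀ x y : ZMod k, φ (x - u) = 0 → φ (y - u) = 0 → R x y := by
    intro x y hx hy
    have hix : i₀ + (x - u) ∈ S := hperS _ hx i₀ hi₀
    have hiy : i₀ + (y - u) ∈ S := hperS _ hy i₀ hi₀
    have h := (hstep _ _ j₀ hix hiy hj₀).1
    have h1 : i₀ + (x - u) + j₀ = x := by rw [hudef]; ring
    have h2 : i₀ + (y - u) + j₀ = y := by rw [hudef]; ring
    rw [h1] at h
    rwa [h2] at h
  have hmain : ∀ m : ZMod k, ∃ x : ZMod k, φ (x - u) = 0 ∧ R m x := by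
    intro m
    by_cases hB : ∃ v, Bad v
    · obtain ⟨v, hv⟩ := hB
      set ρ := (φ (u - m)).val with hρ
      set τ := (φ (v - m)).val with hτ
      have hρd : ρ < d := ZMod.val_lt _
      have hτd : τ < d := ZMod.val_lt _
      have hρcast : ((ρ : ℕ) : ZMod d) = φ (u - m) := by rw [hρ, ZMod.natCast_zmod_val]
      have hτcast : ((τ : ℕ) : ZMod d) = φ (v - m) := by rw [hτ, ZMod.natCast_zmod_val]
      by_cases hcase : ρ ≤ τ
      · -- forward walk
        refine ⟨m + ((ρ : ℕ) : ZMod k), ?_, ?_⟩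
        · have e1 : φ (m + ((ρ : ℕ) : ZMod k) - u) = φ m + ((ρ : ℕ) : ZMod d) - φ u := by
            rw [map_sub, map_add, map_natCast]
          rw [e1, hρcast, map_sub]
          ring
        · refine hwalk m ρ ?_
          intro s hs hbad
          have h0 := hbad2 v (m + (s : ZMod k)) hv hbad
          have h1 : ((s : ℕ) : ZMod d) = φ (v - m) := by
            have e2 : φ (m + (s : ZMod k) - v) = φ m + ((s : ℕ) : ZMod d) - φ v := by
              rw [map_sub, map_add, map_natCast]
            rw [e2] at h0
            rw [map_sub]
            linear_combination h0
          have hs' : s = τ := by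
            have := ZMod.val_cast_of_lt (show s < d by omega)
            rw [h1, ← hτ] at this
            omega
          omega
      · -- backward walk
        push_neg at hcase
        have hdd : ((d - ρ : ℕ) : ZMod d) = - ((ρ : ℕ) : ZMod d) := by
          have h3 : ((d - ρ : ℕ) : ZMod d) + ((ρ : ℕ) : ZMod d) = ((d : ℕ) : ZMod d) := by
            rw [← Nat.cast_add]; congr 1; omega
          rw [ZMod.natCast_self] at h3
          exact eq_neg_of_add_eq_zero_left h3
        refine ⟨m - ((d - ρ : ℕ) : ZMod k), ?_, ?_⟩
        · have e1 : φ (m - ((d - ρ : ℕ) : ZMod k) - u)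
              = φ m - ((d - ρ : ℕ) : ZMod d) - φ u := by
            rw [map_sub, map_sub, map_natCast]
          rw [e1, hdd, hρcast, map_sub]
          ring
        · have hside : ∀ s < d - ρ, ¬ Bad (m - ((d - ρ : ℕ) : ZMod k) + (s : ZMod k)) := by
            intro s hs hbad
            have h0 := hbad2 v _ hv hbad
            have e2 : φ (m - ((d - ρ : ℕ) : ZMod k) + (s : ZMod k) - v)
                = φ m - ((d - ρ : ℕ) : ZMod d) + ((s : ℕ) : ZMod d) - φ v := by
              rw [map_sub, map_add, map_sub, map_natCast, map_natCast]
            rw [e2, hdd, hρcast] at h0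
            have hρ2 : ((ρ : ℕ) : ZMod d) = φ u - φ m := by rw [hρcast, map_sub]
            have h1 : ((ρ + s : ℕ) : ZMod d) = φ (v - m) := by
              rw [map_sub] at h0
              rw [map_sub]
              push_cast
              linear_combination h0 + hρ2
            have h2 := ZMod.val_cast_of_lt (show ρ + s < d by omega)
            rw [h1, ← hτ] at h2
            omega
          have hw := hwalk (m - ((d - ρ : ℕ) : ZMod k)) (d - ρ) hside
          have e3 : m - ((d - ρ : ℕ) : ZMod k) + ((d - ρ : ℕ) : ZMod k) = m := by ring
          rw [e3] at hw
          exact hsymm _ _ hw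
    · refine ⟨m + (((u - m).val : ℕ) : ZMod k), ?_, ?_⟩
      · rw [ZMod.natCast_zmod_val]
        have : m + (u - m) - u = 0 := by ring
        rw [this, map_zero]
      · exact hwalk m _ (fun s _ hb => hB ⟨_, hb⟩)
  intro m m'
  obtain ⟨x, hx, hmx⟩ := hmain m
  obtain ⟨y, hy, hmy⟩ := hmain m'
  exact htrans _ _ _ hmx (htrans _ _ _ (hspec x y hx hy) (hsymm _ _ hmy))

theorem hab_connected_of_B_disjoint {α : Type*} [DecidableEq α] (k : ℕ) (hk : 2 ≤ k)
    (a b : ZMod k → α) (ha : Function.Injective a) (hb : Function.Injective b)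
    (hab : Disjoint (Set.range a) (Set.range b)) (X : Set α)
    (hX : X ⊆ Set.range a ∪ Set.range b)
    (hAX : (Set.range a ∩ X).Nonempty) (hA : (Set.range a \ X).Nonempty)
    (hBX : Set.range b ∩ X = ∅) :
    ((blockGraphS (HAB k a b) X).induce
      ((Set.range a ∪ Set.range b) \ X)).Connected := by

  classical
  haveI : NeZero k := ⟨by omega⟩
  set s : Set α := (Set.range a ∪ Set.range b) \ X with hs
  set G := (blockGraphS (HAB k a b) X).induce ((Set.range a ∪ Set.range b) \ X) with hG
  set S : Set (ZMod k) := {i | a i ∈ X} with hSdef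
  obtain ⟨x₀, hx₀a, hx₀X⟩ := hAX
  obtain ⟨i₀, rfl⟩ := hx₀a
  have hi₀ : i₀ ∈ S := hx₀X
  obtain ⟨y₀, hy₀a, hy₀X⟩ := hA
  obtain ⟨j₀, rfl⟩ := hy₀a
  have hj₀ : j₀ ∉ S := hy₀X
  have hbmem : ∀ m : ZMod k, b m ∈ (Set.range a ∪ Set.range b) \ X := by
    intro m
    refine ⟨Or.inr ⟨m, rfl⟩, fun hbm => ?_⟩
    have : b m ∈ Set.range b ∩ X := ⟨⟨m, rfl⟩, hbm⟩
    rw [hBX] at this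
    exact this
  have hamem : ∀ j : ZMod k, j ∉ S → a j ∈ (Set.range a ∪ Set.range b) \ X :=
    fun j hj => ⟨Or.inl ⟨j, rfl⟩, hj⟩
  -- adjacency in the big graph
  have hadj : ∀ (i j m : ZMod k), i ∈ S → j ∉ S → (m = i + j ∨ m = i + j + 1) →
      (blockGraphS (HAB k a b) X).Adj (a j) (b m) := by
    intro i j m hi hj hm
    refine ⟨?_, a i, hi, i, j, ?_, ?_⟩
    · intro h
      exact (Set.disjoint_left.mp hab ⟨j, rfl⟩) (h ▸ ⟨m, rfl⟩)
    · intro h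
      exact hj (h ▸ hi)
    · rcases hm with rfl | rfl
      · exact Or.inl rfl
      · exact Or.inr rfl
  -- adjacency in the induced graph
  have hadj' : ∀ (i j m : ZMod k) (hi : i ∈ S) (hj : j ∉ S),
      (m = i + j ∨ m = i + j + 1) →
      G.Adj ⟨a j, hamem j hj⟩ ⟨b m, hbmem m⟩ := by
    intro i j m hi hj hm
    exact hadj i j m hi hj hm
  -- Reachability between b's
  set R : ZMod k → ZMod k → Prop :=
    fun m m' => G.Reachable ⟨b m, hbmem m⟩ ⟨b m', hbmem m'⟩ with hR
  have hstep : ∀ i i' j : ZMod k, i ∈ S → i' ∈ S → j ∉ S →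
      R (i + j) (i' + j) ∧ R (i + j) (i' + j + 1) := by
    intro i i' j hi hi' hj
    constructor
    · exact ((hadj' i j (i + j) hi hj (Or.inl rfl)).symm.reachable).trans
        (hadj' i' j (i' + j) hi' hj (Or.inl rfl)).reachable
    · exact ((hadj' i j (i + j) hi hj (Or.inl rfl)).symm.reachable).trans
        (hadj' i' j (i' + j + 1) hi' hj (Or.inr rfl)).reachable
  have hcore : ∀ m m', R m m' :=
    zmod_core S hi₀ hj₀ R (fun m => SimpleGraph.Reachable.refl _)
      (fun _ _ h => h.symm) (fun _ _ _ h h' => h.trans h') hstep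
  -- every vertex reaches some b
  have hkey : ∀ u : ↥((Set.range a ∪ Set.range b) \ X),
      ∃ m : ZMod k, G.Reachable u ⟨b m, hbmem m⟩ := by
    rintro ⟨x, hx1, hx2⟩
    rcases hx1 with ⟨j, rfl⟩ | ⟨m, rfl⟩
    · have hj : j ∉ S := hx2
      refine ⟨i₀ + j, ?_⟩
      have := hadj' i₀ j (i₀ + j) hi₀ hj (Or.inl rfl)
      exact this.reachable
    · exact ⟨m, SimpleGraph.Reachable.refl _⟩
  rw [SimpleGraph.connected_iff]
  refine ⟨fun u v => ?_, ⟨⟨b 0, hbmem 0⟩⟩⟩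
  obtain ⟨m, hu⟩ := hkey u
  obtain ⟨m', hv⟩ := hkey v
  exact hu.trans ((hcore m m').trans hv.symm)
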